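/- For a positive integer j, the polynomial P(a) = C(a,2j)² + C(a-1,2j)², written as a polynomial Q in the variable y = a - j, has degree 4j and all coefficients of odd powers of y equal to zero. -/

import Mathlib

open Finset Polynomial

lemma coeff_comp_neg_X (p : Polynomial ℚ) (m : ℕ) :
    (p.comp (-Polynomial.X)).coeff m = (-1 : ℚ) ^ m * p.coeff m := by
  induction p using Polynomial.induction_on' with
  | add p q hp hq =>
      simp only [Polynomial.add_comp, Polynomial.coeff_add, hp, hq]; ring
  | monomial n a =>
      rw [Polynomial.monomial_comp]
      have hpow : (-Polynomial.X : Polynomial ℚ) ^ n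
          = Polynomial.C ((-1 : ℚ) ^ n) * Polynomial.X ^ n := by
        rw [neg_pow]
        simp [map_pow]
      rw [hpow]
      rcases eq_or_ne m n with rfl | h
      · simp only [Polynomial.coeff_C_mul, Polynomial.coeff_X_pow, if_pos rfl,
          Polynomial.coeff_monomial]
        norm_num
        ring
      · rw [Polynomial.coeff_C_mul, Polynomial.coeff_C_mul, Polynomial.coeff_X_pow,
          if_neg h, Polynomial.coeff_monomial, if_neg (Ne.symm h)]
        ring

/-- For a positive integer `j`, the polynomial `P(a) = C(a,2j)² + C(a-1,2j)²`,
written as a polynomial `Q` in the variable `y = a - j`, has degree `4j` and all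
coefficients of odd powers of `y` equal to zero. -/
theorem stmt8 (j : ℕ) (hj : 1 ≤ j)
    (Cp : Polynomial ℚ)
    (hCp : Cp = Polynomial.C (((2 * j).factorial : ℚ)⁻¹) *
      ∏ i ∈ Finset.range (2 * j), (Polynomial.X - Polynomial.C (i : ℚ)))
    (P : Polynomial ℚ)
    (hP : P = Cp ^ 2 + (Cp.comp (Polynomial.X - 1)) ^ 2)
    (Q : Polynomial ℚ)
    (hQ : Q = P.comp (Polynomial.X + Polynomial.C (j : ℚ))) :
    Q.natDegree = 4 * j ∧ ∀ m : ℕ, Odd m → Q.coeff m = 0 := by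
  set k : ℚ := (((2 * j).factorial : ℚ))⁻¹ with hk
  have hkne : k ≠ 0 := by
    simp [hk]
    exact_mod_cast (Nat.factorial_ne_zero (2 * j))
  -- symmetry of Cp
  have hsym : Cp.comp (Polynomial.C ((2 * j : ℚ) - 1) - Polynomial.X) = Cp := by
    rw [hCp, Polynomial.mul_comp, Polynomial.C_comp, Polynomial.prod_comp]
    congr 1
    have h1 : ∀ i ∈ Finset.range (2 * j),
        (Polynomial.X - Polynomial.C (i : ℚ)).comp
          (Polynomial.C ((2 * j : ℚ) - 1) - Polynomial.X)
        = -(Polynomial.X - Polynomial.C ((2 * j - 1 - i : ℕ) : ℚ)) := by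
      intro i hi
      rw [Finset.mem_range] at hi
      have hc : ((2 * j - 1 - i : ℕ) : ℚ) = (2 * j : ℚ) - 1 - (i : ℚ) := by
        have h1' : i ≤ 2 * j - 1 := by omega
        have h2' : 1 ≤ 2 * j := by omega
        push_cast [Nat.cast_sub h1', Nat.cast_sub h2']
        ring
      simp only [Polynomial.sub_comp, Polynomial.X_comp, Polynomial.C_comp, hc,
        map_sub, map_mul, map_one, map_ofNat]
      ring
    rw [Finset.prod_congr rfl h1]
    have hneg : ∏ i ∈ Finset.range (2 * j),
        -(Polynomial.X - Polynomial.C ((2 * j - 1 - i : ℕ) : ℚ))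
        = (-1 : Polynomial ℚ) ^ (2 * j) * ∏ i ∈ Finset.range (2 * j),
            (Polynomial.X - Polynomial.C ((2 * j - 1 - i : ℕ) : ℚ)) := by
      have h2 : ∀ i ∈ Finset.range (2 * j),
          -(Polynomial.X - Polynomial.C ((2 * j - 1 - i : ℕ) : ℚ))
          = (-1 : Polynomial ℚ) * (Polynomial.X - Polynomial.C ((2 * j - 1 - i : ℕ) : ℚ)) := by
        intro i _; ring
      rw [Finset.prod_congr rfl h2, Finset.prod_mul_distrib, Finset.prod_const,
        Finset.card_range]
    rw [hneg, (Even.neg_one_pow (by exact even_two_mul j)), one_mul]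
    exact Finset.prod_range_reflect (fun i => Polynomial.X - Polynomial.C (i : ℚ)) (2 * j)
  have hsymm' : ∀ a b : ℚ, a + b = 2 * j - 1 →
      Cp.comp (Polynomial.X + Polynomial.C a) = Cp.comp (Polynomial.C b - Polynomial.X) := by
    intro a b hab
    conv_lhs => rw [← hsym]
    rw [Polynomial.comp_assoc]
    congr 1
    have : b = (2 * j : ℚ) - 1 - a := by linarith
    subst this
    simp only [Polynomial.sub_comp, Polynomial.X_comp, Polynomial.C_comp,
      Polynomial.add_comp]
    simp only [map_sub, map_mul, map_one, map_ofNat]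
    ring
  -- expand Q
  have hcomp1 : (Polynomial.X - 1 : Polynomial ℚ).comp (Polynomial.X + Polynomial.C (j : ℚ))
      = Polynomial.X + Polynomial.C ((j : ℚ) - 1) := by
    simp only [Polynomial.sub_comp, Polynomial.X_comp, Polynomial.one_comp, map_sub, map_one]
    ring
  have hQ' : Q = (Cp.comp (Polynomial.X + Polynomial.C (j : ℚ))) ^ 2
      + (Cp.comp (Polynomial.X + Polynomial.C ((j : ℚ) - 1))) ^ 2 := by
    rw [hQ, hP, Polynomial.add_comp, Polynomial.pow_comp, Polynomial.pow_comp,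
      Polynomial.comp_assoc, hcomp1]
  -- Q is even
  have hQeven : Q.comp (-Polynomial.X) = Q := by
    have e1 : Cp.comp (Polynomial.X + Polynomial.C ((j : ℚ) - 1))
        = Cp.comp (Polynomial.C (j : ℚ) - Polynomial.X) := by
      apply hsymm'; ring
    have e2 : Cp.comp (Polynomial.X + Polynomial.C (j : ℚ))
        = Cp.comp (Polynomial.C ((j : ℚ) - 1) - Polynomial.X) := by
      apply hsymm'; ring
    have c1 : (Polynomial.X + Polynomial.C (j : ℚ)).comp (-Polynomial.X)
        = Polynomial.C (j : ℚ) - Polynomial.X := by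
      simp [Polynomial.add_comp]; ring
    have c2 : (Polynomial.X + Polynomial.C ((j : ℚ) - 1)).comp (-Polynomial.X)
        = Polynomial.C ((j : ℚ) - 1) - Polynomial.X := by
      simp [Polynomial.add_comp]; ring
    conv_lhs => rw [hQ']
    rw [Polynomial.add_comp, Polynomial.pow_comp, Polynomial.pow_comp,
      Polynomial.comp_assoc, Polynomial.comp_assoc, c1, c2, ← e1, ← e2]
    rw [hQ']
    ring
  constructor
  · -- degree
    have hprodmonic : (∏ i ∈ Finset.range (2 * j),
        (Polynomial.X - Polynomial.C (i : ℚ))).Monic :=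
      monic_prod_of_monic _ _ fun i _ => Polynomial.monic_X_sub_C _
    have hproddeg : (∏ i ∈ Finset.range (2 * j),
        (Polynomial.X - Polynomial.C (i : ℚ))).natDegree = 2 * j := by
      rw [Polynomial.natDegree_prod]
      · simp only [Polynomial.natDegree_X_sub_C]
        simp
      · intro i _; exact Polynomial.X_sub_C_ne_zero _
    have hCpdeg : Cp.natDegree = 2 * j := by
      rw [hCp, Polynomial.natDegree_C_mul hkne, hproddeg]
    have hCpco : Cp.coeff (2 * j) = k := by
      have h2 := hprodmonic.coeff_natDegree
      rw [hproddeg] at h2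
      rw [hCp, Polynomial.coeff_C_mul, h2, mul_one]
    have hCplead : Cp.leadingCoeff = k := by
      rw [Polynomial.leadingCoeff, hCpdeg]; exact hCpco
    have hX1deg : (Polynomial.X - 1 : Polynomial ℚ).natDegree = 1 := by
      have h : (Polynomial.X - 1 : Polynomial ℚ)
          = Polynomial.X - Polynomial.C 1 := by simp
      rw [h, Polynomial.natDegree_X_sub_C]
    have hCpcdeg : (Cp.comp (Polynomial.X - 1)).natDegree = 2 * j := by
      rw [Polynomial.natDegree_comp, hX1deg, hCpdeg, mul_one]
    have hCpclead : (Cp.comp (Polynomial.X - 1)).leadingCoeff = k := by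
      rw [Polynomial.leadingCoeff_comp (by rw [hX1deg]; norm_num), hCplead]
      have h : (Polynomial.X - 1 : Polynomial ℚ).leadingCoeff = 1 := by
        have h2 : (Polynomial.X - 1 : Polynomial ℚ)
            = Polynomial.X - Polynomial.C 1 := by simp
        rw [h2]; exact (Polynomial.monic_X_sub_C _)
      rw [h]; simp
    have hsq1deg : (Cp ^ 2).natDegree = 4 * j := by
      rw [Polynomial.natDegree_pow, hCpdeg]; ring
    have hsq2deg : ((Cp.comp (Polynomial.X - 1)) ^ 2).natDegree = 4 * j := by
      rw [Polynomial.natDegree_pow, hCpcdeg]; ring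
    have hc1 : (Cp ^ 2).coeff (4 * j) = k ^ 2 := by
      have h := Polynomial.leadingCoeff_pow Cp 2
      rw [Polynomial.leadingCoeff, hsq1deg] at h
      rw [h, hCplead]
    have hc2 : ((Cp.comp (Polynomial.X - 1)) ^ 2).coeff (4 * j) = k ^ 2 := by
      have h := Polynomial.leadingCoeff_pow (Cp.comp (Polynomial.X - 1)) 2
      rw [Polynomial.leadingCoeff, hsq2deg] at h
      rw [h, hCpclead]
    have hPco : P.coeff (4 * j) = 2 * k ^ 2 := by
      rw [hP, Polynomial.coeff_add, hc1, hc2]; ring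
    have hPdeg : P.natDegree = 4 * j := by
      apply le_antisymm
      · rw [hP]
        refine le_trans (Polynomial.natDegree_add_le _ _) ?_
        rw [hsq1deg, hsq2deg]; simp
      · apply Polynomial.le_natDegree_of_ne_zero
        rw [hPco]
        positivity
    rw [hQ, Polynomial.natDegree_comp, hPdeg, Polynomial.natDegree_X_add_C, mul_one]
  · intro m hm
    have h1 := coeff_comp_neg_X Q m
    rw [hQeven, hm.neg_one_pow] at h1
    linarith
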